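/- For every real number c, the r×r matrix I_r − c·Σ_{i=1}^m Q_i is positive semidefinite if and only if c ≤ λ_min, where λ_min is the smallest eigenvalue of the Gram matrix ΦᴴΦ. Equivalently, the largest eigenvalue of Σ_{i=1}^m Q_i equals 1/λ_min, the reciprocal of the smallest eigenvalue of ΦᴴΦ (i.e. the reciprocal of the square of the smallest singular value of Φ). -/

import Mathlib

open Matrix BigOperators ComplexOrder

noncomputable section

/-- The reciprocal states: columns of `Φ (ΦᴴΦ)⁻¹`. -/
def reciprocal {r m : ℕ} (Φ : Matrix (Fin r) (Fin m) ℂ) : Matrix (Fin r) (Fin m) ℂ :=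
  Φ * (Φᴴ * Φ)⁻¹

/-- The rank-one operator `Q_i = φ̃_i φ̃_iᴴ`. -/
def Qop {r m : ℕ} (Φ : Matrix (Fin r) (Fin m) ℂ) (i : Fin m) : Matrix (Fin r) (Fin r) ℂ :=
  vecMulVec (fun a => reciprocal Φ a i) (fun b => star (reciprocal Φ b i))

/-- Conjugation identity for quadratic forms. -/
lemma quad_conj {r m : ℕ} (A : Matrix (Fin r) (Fin m) ℂ) (M : Matrix (Fin m) (Fin m) ℂ)
    (x : Fin r → ℂ) :
    star x ⬝ᵥ (A * M * Aᴴ) *ᵥ x = star (Aᴴ *ᵥ x) ⬝ᵥ M *ᵥ (Aᴴ *ᵥ x) := by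
  rw [← Matrix.mulVec_mulVec, ← Matrix.mulVec_mulVec, Matrix.dotProduct_mulVec,
    Matrix.star_mulVec, Matrix.conjTranspose_conjTranspose]

lemma quad_self {r m : ℕ} (A : Matrix (Fin r) (Fin m) ℂ) (x : Fin r → ℂ) :
    star x ⬝ᵥ (A * Aᴴ) *ᵥ x = star (Aᴴ *ᵥ x) ⬝ᵥ (Aᴴ *ᵥ x) := by
  have h := quad_conj A 1 x
  simpa using h

lemma quad_self' {r m : ℕ} (A : Matrix (Fin r) (Fin m) ℂ) (u : Fin m → ℂ) :
    star (A *ᵥ u) ⬝ᵥ (A *ᵥ u) = star u ⬝ᵥ (Aᴴ * A) *ᵥ u := by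
  rw [Matrix.star_mulVec, ← Matrix.dotProduct_mulVec, Matrix.mulVec_mulVec]

lemma sum_Qop {r m : ℕ} (Φ : Matrix (Fin r) (Fin m) ℂ) :
    ∑ i : Fin m, Qop Φ i = reciprocal Φ * (reciprocal Φ)ᴴ := by
  ext a b
  simp [Qop, vecMulVec_apply, Matrix.mul_apply, Matrix.conjTranspose_apply,
    Matrix.sum_apply, mul_comm]

set_option maxHeartbeats 1600000 in
theorem stmt_1 (m r : ℕ) (hm : 0 < m) (hmr : m ≤ r)
    (Φ : Matrix (Fin r) (Fin m) ℂ)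
    (hind : LinearIndependent ℂ (fun i : Fin m => fun j : Fin r => Φ j i))
    (lam : ℝ)
    -- `lam` is an eigenvalue of the Gram matrix `ΦᴴΦ` ...
    (hev : ∃ u : Fin m → ℂ, u ≠ 0 ∧ (Φᴴ * Φ).mulVec u = (lam : ℂ) • u)
    -- ... and it is the smallest one:
    (hmin : ((Φᴴ * Φ) - (lam : ℂ) • 1).PosSemidef) :
    ∀ c : ℝ,
      ((1 : Matrix (Fin r) (Fin r) ℂ) - (c : ℂ) • ∑ i : Fin m, Qop Φ i).PosSemidef ↔
        c ≤ lam := by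
  set G := Φᴴ * Φ with hGdef
  set Ψ := reciprocal Φ with hΨdef
  set S := Ψ * Ψᴴ with hSdef
  have hGH : G.IsHermitian := Matrix.isHermitian_conjTranspose_mul_self Φ
  have hΦinj : Function.Injective Φ.mulVec := Matrix.mulVec_injective_iff.mpr hind
  have hG : G.PosDef := by
    refine Matrix.PosDef.of_dotProduct_mulVec_pos hGH (fun x hx => ?_)
    have h1 : Φ *ᵥ x ≠ 0 := fun h => hx (hΦinj (by simpa using h))
    have h2 : star x ⬝ᵥ G *ᵥ x = star (Φ *ᵥ x) ⬝ᵥ (Φ *ᵥ x) := by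
      rw [quad_self']
    rw [h2]
    exact Matrix.dotProduct_star_self_pos_iff.mpr h1
  have hdet : IsUnit G.det := isUnit_iff_ne_zero.mpr hG.det_pos.ne'
  have hGinv : G⁻¹ * G = 1 := Matrix.nonsing_inv_mul G hdet
  have hGiH : G⁻¹ᴴ = G⁻¹ := hGH.inv
  have hΨconj : Ψᴴ = G⁻¹ * Φᴴ := by
    rw [hΨdef, reciprocal, Matrix.conjTranspose_mul, ← hGdef, hGiH]
  have hΨΨ : Ψᴴ * Ψ = G⁻¹ := by
    rw [hΨconj, hΨdef, reciprocal, ← hGdef]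
    calc G⁻¹ * Φᴴ * (Φ * G⁻¹) = G⁻¹ * (Φᴴ * Φ) * G⁻¹ := by
          simp only [Matrix.mul_assoc]
      _ = G⁻¹ * G * G⁻¹ := by rw [hGdef]
      _ = G⁻¹ := by rw [hGinv, Matrix.one_mul]
  have hΨG : Ψ * G = Φ := by
    rw [hΨdef, reciprocal, ← hGdef, Matrix.mul_assoc, hGinv, Matrix.mul_one]
  set P := Φ * G⁻¹ * Φᴴ with hPdef
  have hPeq : Ψ * G * Ψᴴ = P := by
    rw [hΨG, hΨconj, hPdef, Matrix.mul_assoc]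
  have hPH : Pᴴ = P := by
    rw [hPdef]
    simp only [Matrix.conjTranspose_mul, Matrix.conjTranspose_conjTranspose, hGiH]
    rw [Matrix.mul_assoc]
  have hPP : P * P = P := by
    rw [hPdef]
    calc Φ * G⁻¹ * Φᴴ * (Φ * G⁻¹ * Φᴴ)
        = Φ * G⁻¹ * (Φᴴ * Φ) * (G⁻¹ * Φᴴ) := by simp only [Matrix.mul_assoc]
      _ = Φ * (G⁻¹ * G) * (G⁻¹ * Φᴴ) := by rw [← hGdef]; simp only [Matrix.mul_assoc]
      _ = Φ * G⁻¹ * Φᴴ := by rw [hGinv, Matrix.mul_one, ← Matrix.mul_assoc]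
  have hIP : (1 - P).PosSemidef := by
    have h1 : (1 - P)ᴴ = 1 - P := by
      rw [Matrix.conjTranspose_sub, Matrix.conjTranspose_one, hPH]
    have h2 : (1 - P) * (1 - P) = 1 - P := by
      rw [Matrix.sub_mul, Matrix.one_mul, Matrix.mul_sub, Matrix.mul_one, hPP, sub_self,
        sub_zero]
    have := Matrix.posSemidef_conjTranspose_mul_self (1 - P)
    rwa [h1, h2] at this
  have hSsum : ∑ i : Fin m, Qop Φ i = S := sum_Qop Φ
  intro c
  rw [hSsum]
  have hquad : ∀ x : Fin r → ℂ,
      star x ⬝ᵥ ((1 : Matrix (Fin r) (Fin r) ℂ) - (c : ℂ) • S) *ᵥ x =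
        star x ⬝ᵥ x - (c : ℂ) * (star (Ψᴴ *ᵥ x) ⬝ᵥ (Ψᴴ *ᵥ x)) := by
    intro x
    rw [Matrix.sub_mulVec, Matrix.smul_mulVec, Matrix.one_mulVec, dotProduct_sub,
      dotProduct_smul, smul_eq_mul, hSdef, quad_self]
  constructor
  · -- PosSemidef → c ≤ lam
    intro hpsd
    obtain ⟨u, hu, huev⟩ := hev
    have hn : 0 < star u ⬝ᵥ u := Matrix.dotProduct_star_self_pos_iff.mpr hu
    have hq : 0 < star u ⬝ᵥ G *ᵥ u := hG.dotProduct_mulVec_pos hu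
    have hqe : star u ⬝ᵥ G *ᵥ u = (lam : ℂ) * (star u ⬝ᵥ u) := by
      rw [huev, dotProduct_smul, smul_eq_mul]
    have hnim : (star u ⬝ᵥ u).im = 0 := by
      have h := hn.le
      rw [Complex.le_def] at h
      simpa using h.2.symm
    have hnre : 0 < (star u ⬝ᵥ u).re := by
      rw [Complex.lt_def] at hn
      simpa using hn.1
    have hlam : 0 < lam := by
      rw [hqe, Complex.lt_def] at hq
      have h : 0 < lam * (star u ⬝ᵥ u).re := by
        simpa [Complex.mul_re, hnim] using hq.1
      nlinarith
    have hlamC : (lam : ℂ) ≠ 0 := Complex.ofReal_ne_zero.mpr hlam.ne'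
    have hGiu : G⁻¹ *ᵥ u = ((lam : ℂ))⁻¹ • u := by
      have h1 : G⁻¹ *ᵥ (G *ᵥ u) = u := by
        rw [Matrix.mulVec_mulVec, hGinv, Matrix.one_mulVec]
      rw [huev, Matrix.mulVec_smul] at h1
      calc G⁻¹ *ᵥ u = ((lam : ℂ))⁻¹ • ((lam : ℂ) • (G⁻¹ *ᵥ u)) := by
            rw [smul_smul, inv_mul_cancel₀ hlamC, one_smul]
        _ = ((lam : ℂ))⁻¹ • u := by rw [h1]
    set x₀ := Ψ *ᵥ u with hx₀
    have hy₀ : Ψᴴ *ᵥ x₀ = ((lam : ℂ))⁻¹ • u := by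
      rw [hx₀, Matrix.mulVec_mulVec, hΨΨ, hGiu]
    have hxx : star x₀ ⬝ᵥ x₀ = ((lam : ℂ))⁻¹ * (star u ⬝ᵥ u) := by
      rw [hx₀, quad_self', hΨΨ, hGiu, dotProduct_smul, smul_eq_mul]
    have hyy : star (Ψᴴ *ᵥ x₀) ⬝ᵥ (Ψᴴ *ᵥ x₀) =
        ((lam : ℂ))⁻¹ * (((lam : ℂ))⁻¹ * (star u ⬝ᵥ u)) := by
      rw [hy₀]
      simp [star_smul, smul_dotProduct, dotProduct_smul, smul_eq_mul, Complex.star_def,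
        map_inv₀, Complex.conj_ofReal]
    have hineq := hpsd.dotProduct_mulVec_nonneg x₀
    rw [hquad x₀, hxx, hyy] at hineq
    set t := (star u ⬝ᵥ u).re with ht
    have hnr : star u ⬝ᵥ u = (t : ℂ) := by
      apply Complex.ext <;> simp [ht, hnim]
    rw [hnr] at hineq
    have hcast : ((lam : ℂ))⁻¹ * (t : ℂ) - (c : ℂ) * (((lam : ℂ))⁻¹ * (((lam : ℂ))⁻¹ * (t : ℂ)))
        = ((lam⁻¹ * t - c * (lam⁻¹ * (lam⁻¹ * t)) : ℝ) : ℂ) := by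
      push_cast
      ring
    rw [hcast] at hineq
    have hreal : 0 ≤ lam⁻¹ * t - c * (lam⁻¹ * (lam⁻¹ * t)) := Complex.zero_le_real.mp hineq
    have h5 : 0 ≤ lam * (lam * (lam⁻¹ * t - c * (lam⁻¹ * (lam⁻¹ * t)))) :=
      mul_nonneg hlam.le (mul_nonneg hlam.le hreal)
    have h6 : lam * (lam * (lam⁻¹ * t - c * (lam⁻¹ * (lam⁻¹ * t)))) = (lam - c) * t := by
      field_simp
    rw [h6] at h5
    nlinarith [h5, hnre]
  · -- c ≤ lam → PosSemidef
    intro hc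
    have hcC : (c : ℂ) ≤ (lam : ℂ) := Complex.real_le_real.mpr hc
    refine Matrix.PosSemidef.of_dotProduct_mulVec_nonneg ?_ ?_
    · have hSH : S.IsHermitian := Matrix.isHermitian_mul_conjTranspose_self Ψ
      show (1 - (c : ℂ) • S)ᴴ = 1 - (c : ℂ) • S
      rw [Matrix.conjTranspose_sub, Matrix.conjTranspose_one, Matrix.conjTranspose_smul,
        hSH.eq]
      simp only [Complex.star_def, Complex.conj_ofReal]
    · intro x
      set y := Ψᴴ *ᵥ x with hy
      have hny : (0 : ℂ) ≤ star y ⬝ᵥ y := dotProduct_star_self_nonneg y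
      have h1 : (lam : ℂ) * (star y ⬝ᵥ y) ≤ star y ⬝ᵥ G *ᵥ y := by
        have h := hmin.dotProduct_mulVec_nonneg y
        rw [Matrix.sub_mulVec, Matrix.smul_mulVec, Matrix.one_mulVec, dotProduct_sub,
          dotProduct_smul, smul_eq_mul] at h
        exact sub_nonneg.mp h
      have h2 : star x ⬝ᵥ P *ᵥ x = star y ⬝ᵥ G *ᵥ y := by
        rw [← hPeq, quad_conj]
      have h3 : star x ⬝ᵥ P *ᵥ x ≤ star x ⬝ᵥ x := by
        have h := hIP.dotProduct_mulVec_nonneg x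
        rw [Matrix.sub_mulVec, Matrix.one_mulVec, dotProduct_sub] at h
        exact sub_nonneg.mp h
      have h4 : (c : ℂ) * (star y ⬝ᵥ y) ≤ (lam : ℂ) * (star y ⬝ᵥ y) :=
        mul_le_mul_of_nonneg_right hcC hny
      rw [hquad x]
      refine sub_nonneg.mpr ?_
      calc (c : ℂ) * (star y ⬝ᵥ y) ≤ (lam : ℂ) * (star y ⬝ᵥ y) := h4
        _ ≤ star y ⬝ᵥ G *ᵥ y := h1
        _ = star x ⬝ᵥ P *ᵥ x := h2.symm
        _ ≤ star x ⬝ᵥ x := h3
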